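/- Let x_1, …, x_n ∈ ℝ^{2n} be linearly independent vectors spanning a Lagrangian subspace, i.e. x_iᵀ J x_j = 0 for all i, j, and let Ĥ := X_R X_L⁺ + Jᵀ (X_R X_L⁺)ᵀ J. Then ‖Ĥ‖₂ ≤ ‖H‖₂ for every skew-Hamiltonian matrix H ∈ ℝ^{2n×2n} satisfying H x_k = x_{k+1} for all k = 1, …, n-1. -/
import Mathlib


open Matrix

noncomputable section

/-- The canonical skew-symmetric matrix `J = [[0, I],[-I, 0]]`. -/
def Jmat (n : ℕ) : Matrix (Fin n ⊕ Fin n) (Fin n ⊕ Fin n) ℝ :=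
  Matrix.fromBlocks 0 1 (-1) 0

/-- A matrix `H` is skew-Hamiltonian if `Jᵀ Hᵀ J = H`. -/
def IsSkewHamiltonian {n : ℕ} (H : Matrix (Fin n ⊕ Fin n) (Fin n ⊕ Fin n) ℝ) : Prop :=
  (Jmat n)ᵀ * Hᵀ * Jmat n = H

/-- `X_L = [x_1 ⋯ x_{n-1}]`. -/
def XL {n : ℕ} (x : Fin n → (Fin n ⊕ Fin n) → ℝ) :
    Matrix (Fin n ⊕ Fin n) (Fin (n - 1)) ℝ :=
  Matrix.of fun i j => x ⟨j.1, lt_of_lt_of_le j.2 (Nat.sub_le n 1)⟩ i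

/-- `X_R = [x_2 ⋯ x_n]`. -/
def XR {n : ℕ} (x : Fin n → (Fin n ⊕ Fin n) → ℝ) :
    Matrix (Fin n ⊕ Fin n) (Fin (n - 1)) ℝ :=
  Matrix.of fun i j => x ⟨j.1 + 1, by have := j.2; omega⟩ i

/-- The Moore–Penrose pseudoinverse `X_L⁺ = (X_Lᵀ X_L)⁻¹ X_Lᵀ` of `X_L`
(for `X_L` with linearly independent columns). -/
def XLpinv {n : ℕ} (x : Fin n → (Fin n ⊕ Fin n) → ℝ) :
    Matrix (Fin (n - 1)) (Fin n ⊕ Fin n) ℝ :=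
  ((XL x)ᵀ * XL x)⁻¹ * (XL x)ᵀ

/-- `Ĥ = X_R X_L⁺ + Jᵀ (X_R X_L⁺)ᵀ J`. -/
def Hhat {n : ℕ} (x : Fin n → (Fin n ⊕ Fin n) → ℝ) :
    Matrix (Fin n ⊕ Fin n) (Fin n ⊕ Fin n) ℝ :=
  XR x * XLpinv x + (Jmat n)ᵀ * (XR x * XLpinv x)ᵀ * Jmat n

/-- `H` realizes the Krylov relations `H x_k = x_{k+1}`, `k = 1, …, n-1`. -/
def KrylovRel {n : ℕ} (H : Matrix (Fin n ⊕ Fin n) (Fin n ⊕ Fin n) ℝ)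
    (x : Fin n → (Fin n ⊕ Fin n) → ℝ) : Prop :=
  ∀ k : Fin (n - 1), H *ᵥ x ⟨k.1, lt_of_lt_of_le k.2 (Nat.sub_le n 1)⟩
    = x ⟨k.1 + 1, by have := k.2; omega⟩

/-- The spectral norm (Euclidean operator norm) of a real square matrix. -/
def specNorm {m : Type*} [Fintype m] [DecidableEq m] (M : Matrix m m ℝ) : ℝ :=
  ‖Matrix.toEuclideanCLM (𝕜 := ℝ) M‖

/- ### Auxiliary lemmas -/

open scoped RealInnerProductSpace

section Aux

/-- Symmetry of a self-adjoint continuous linear map w.r.t. the real inner product. -/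
lemma aux_csa_symm {E : Type*} [NormedAddCommGroup E] [InnerProductSpace ℝ E] [CompleteSpace E]
    (A : E →L[ℝ] E) (hA : IsSelfAdjoint A) (a b : E) : ⟪A a, b⟫ = ⟪a, A b⟫ := by
  conv_lhs => rw [← hA.adjoint_eq]
  exact ContinuousLinearMap.adjoint_inner_left A b a

/-- A self-adjoint idempotent is a contraction. -/
lemma aux_norm_proj_apply_le {E : Type*} [NormedAddCommGroup E] [InnerProductSpace ℝ E]
    [CompleteSpace E]
    (q : E →L[ℝ] E) (hq : IsSelfAdjoint q) (hq2 : q * q = q) (z : E) : ‖q z‖ ≤ ‖z‖ := by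
  have hqq : q (q z) = q z := by
    have := congrFun (congrArg DFunLike.coe hq2) z
    simpa using this
  have h1 : ‖q z‖ ^ 2 = ⟪z, q z⟫ := by
    rw [← real_inner_self_eq_norm_sq, aux_csa_symm q hq z (q z), hqq]
  have h2 : ⟪z, q z⟫ ≤ ‖z‖ * ‖q z‖ := real_inner_le_norm z (q z)
  rcases eq_or_lt_of_le (norm_nonneg (q z)) with h | h
  · rw [← h]; exact norm_nonneg z
  · nlinarith [h1, h2]

/-- The key abstract estimate: if `p, q` are orthogonal projections and `q T p = 0`,
then `‖T p + q T‖ ≤ ‖T‖`. -/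
lemma aux_opnorm_proj_bound {E : Type*} [NormedAddCommGroup E] [InnerProductSpace ℝ E]
    [CompleteSpace E]
    (T p q : E →L[ℝ] E) (hp : IsSelfAdjoint p) (hq : IsSelfAdjoint q)
    (hp2 : p * p = p) (hq2 : q * q = q) (hqTp : q * T * p = 0) :
    ‖T * p + q * T‖ ≤ ‖T‖ := by
  refine ContinuousLinearMap.opNorm_le_bound _ (norm_nonneg T) fun v => ?_
  set w := (1 - p) v with hw
  have hvw : p v + w = v := by simp [hw]
  have hzero : q (T (p v)) = 0 := by
    have := congrFun (congrArg DFunLike.coe hqTp) v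
    simpa using this
  have hTv : T v = T (p v) + T w := by rw [← map_add, hvw]
  have e1 : (T * p + q * T) v = T (p v) + q (T w) := by
    show T (p v) + q (T v) = _
    rw [hTv, map_add, hzero, zero_add]
  have hinner : ⟪T (p v), q (T w)⟫ = 0 := by
    rw [← aux_csa_symm q hq (T (p v)) (T w), hzero, inner_zero_left]
  have hpyth1 : ‖T (p v) + q (T w)‖ ^ 2 = ‖T (p v)‖ ^ 2 + ‖q (T w)‖ ^ 2 := by
    rw [norm_add_sq_real, hinner]; ring
  have hpw0 : p w = 0 := by
    have : (p * (1 - p)) v = 0 := by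
      rw [mul_sub, mul_one, hp2, sub_self]; simp
    simpa [hw] using this
  have hinner2 : ⟪p v, w⟫ = 0 := by
    rw [aux_csa_symm p hp v w, hpw0, inner_zero_right]
  have hpv : ‖p v‖ ^ 2 + ‖w‖ ^ 2 = ‖v‖ ^ 2 := by
    have h := norm_add_sq_real (p v) w
    rw [hinner2, hvw] at h
    linarith
  have b1 : ‖T (p v)‖ ≤ ‖T‖ * ‖p v‖ := T.le_opNorm _
  have b2 : ‖q (T w)‖ ≤ ‖T‖ * ‖w‖ :=
    le_trans (aux_norm_proj_apply_le q hq hq2 _) (T.le_opNorm _)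
  have b1' : ‖T (p v)‖ ^ 2 ≤ (‖T‖ * ‖p v‖) ^ 2 := pow_le_pow_left₀ (norm_nonneg _) b1 2
  have b2' : ‖q (T w)‖ ^ 2 ≤ (‖T‖ * ‖w‖) ^ 2 := pow_le_pow_left₀ (norm_nonneg _) b2 2
  have sq : ‖(T * p + q * T) v‖ ^ 2 ≤ (‖T‖ * ‖v‖) ^ 2 := by
    rw [e1, hpyth1]
    calc ‖T (p v)‖ ^ 2 + ‖q (T w)‖ ^ 2 ≤ (‖T‖ * ‖p v‖) ^ 2 + (‖T‖ * ‖w‖) ^ 2 :=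
          add_le_add b1' b2'
      _ = ‖T‖ ^ 2 * (‖p v‖ ^ 2 + ‖w‖ ^ 2) := by ring
      _ = (‖T‖ * ‖v‖) ^ 2 := by rw [hpv]; ring
  exact le_of_pow_le_pow_left₀ two_ne_zero (mul_nonneg (norm_nonneg T) (norm_nonneg v)) sq

/-- The Gram matrix of `X_L` is invertible. -/
lemma aux_gram_isUnit {n : ℕ} (x : Fin n → (Fin n ⊕ Fin n) → ℝ)
    (hLI : LinearIndependent ℝ x) : IsUnit ((XL x)ᵀ * XL x) := by
  rw [← Matrix.mulVec_injective_iff_isUnit]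
  have key : ∀ v, ((XL x)ᵀ * XL x) *ᵥ v = 0 → v = 0 := by
    intro v hv
    have h1 : (XL x *ᵥ v) ⬝ᵥ (XL x *ᵥ v) = 0 := by
      have : v ⬝ᵥ (((XL x)ᵀ * XL x) *ᵥ v) = 0 := by rw [hv]; simp
      rwa [← Matrix.mulVec_mulVec, Matrix.dotProduct_mulVec, Matrix.vecMul_transpose] at this
    have h2 : XL x *ᵥ v = 0 := by
      funext i
      rw [dotProduct] at h1
      have := (Finset.sum_eq_zero_iff_of_nonneg
        (fun j _ => mul_self_nonneg ((XL x *ᵥ v) j))).mp h1 i (Finset.mem_univ i)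
      simpa using mul_self_eq_zero.mp this
    have hLI' : LinearIndependent ℝ
        (fun j : Fin (n - 1) => x ⟨j.1, lt_of_lt_of_le j.2 (Nat.sub_le n 1)⟩) := by
      apply hLI.comp
      intro a b hab
      simpa [Fin.ext_iff] using congrArg Fin.val hab
    rw [Fintype.linearIndependent_iff] at hLI'
    funext j
    apply hLI' v _ j
    funext i
    have := congrFun h2 i
    simpa [Matrix.mulVec, dotProduct, XL, Finset.sum_apply, mul_comm] using this
  intro a b hab
  have := key (a - b) (by rw [Matrix.mulVec_sub, hab, sub_self])
  exact sub_eq_zero.mp this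

/-- The Krylov relations in matrix form: `H X_L = X_R`. -/
lemma aux_HXL {n : ℕ} (x : Fin n → (Fin n ⊕ Fin n) → ℝ)
    (H : Matrix (Fin n ⊕ Fin n) (Fin n ⊕ Fin n) ℝ) (hK : KrylovRel H x) :
    H * XL x = XR x := by
  ext i j
  have := congrFun (hK j) i
  simpa [Matrix.mul_apply, Matrix.mulVec, dotProduct, XL, XR] using this

/-- The Lagrangian condition in matrix form: `X_Lᵀ (J X_R) = 0`. -/
lemma aux_lagXR {n : ℕ} (x : Fin n → (Fin n ⊕ Fin n) → ℝ)
    (hLag : ∀ i j : Fin n, x i ⬝ᵥ (Jmat n *ᵥ x j) = 0) :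
    (XL x)ᵀ * (Jmat n * XR x) = 0 := by
  ext j l
  have := hLag ⟨j.1, lt_of_lt_of_le j.2 (Nat.sub_le n 1)⟩ ⟨l.1 + 1, by have := l.2; omega⟩
  simpa [Matrix.mul_apply, Matrix.mulVec, dotProduct, XL, XR,
    Matrix.transpose_apply, Finset.mul_sum, Finset.sum_mul, mul_comm, mul_left_comm] using this

lemma aux_JJt {n : ℕ} : Jmat n * (Jmat n)ᵀ = 1 := by
  simp [Jmat, Matrix.fromBlocks_transpose, Matrix.fromBlocks_multiply, ← Matrix.fromBlocks_one]

/-- The structural decomposition `Ĥ = H P + Q H` with `P, Q` orthogonal projections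
satisfying `Q H P = 0`. -/
lemma aux_Hhat_decomp {n : ℕ} (x : Fin n → (Fin n ⊕ Fin n) → ℝ)
    (hLI : LinearIndependent ℝ x)
    (hLag : ∀ i j : Fin n, x i ⬝ᵥ (Jmat n *ᵥ x j) = 0)
    (H : Matrix (Fin n ⊕ Fin n) (Fin n ⊕ Fin n) ℝ)
    (hH : IsSkewHamiltonian H) (hK : KrylovRel H x) :
    ∃ P Q : Matrix (Fin n ⊕ Fin n) (Fin n ⊕ Fin n) ℝ,
      Pᵀ = P ∧ Qᵀ = Q ∧ P * P = P ∧ Q * Q = Q ∧ Q * H * P = 0 ∧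
        Hhat x = H * P + Q * H := by
  have hGdet : IsUnit ((XL x)ᵀ * XL x).det :=
    (Matrix.isUnit_iff_isUnit_det _).mp (aux_gram_isUnit x hLI)
  have hGinv : ((XL x)ᵀ * XL x)⁻¹ * ((XL x)ᵀ * XL x) = 1 :=
    Matrix.nonsing_inv_mul _ hGdet
  have hKXL : XLpinv x * XL x = 1 := by
    rw [XLpinv, Matrix.mul_assoc, hGinv]
  refine ⟨XL x * XLpinv x, (Jmat n)ᵀ * (XL x * XLpinv x) * Jmat n, ?_, ?_, ?_, ?_, ?_, ?_⟩
  · -- Pᵀ = P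
    simp [XLpinv, Matrix.transpose_mul, Matrix.transpose_transpose,
      Matrix.transpose_nonsing_inv, Matrix.mul_assoc]
  · -- Qᵀ = Q
    simp [XLpinv, Matrix.transpose_mul, Matrix.transpose_transpose,
      Matrix.transpose_nonsing_inv, Matrix.mul_assoc]
  · -- P idempotent
    calc (XL x * XLpinv x) * (XL x * XLpinv x)
        = XL x * ((XLpinv x * XL x) * XLpinv x) := by simp only [Matrix.mul_assoc]
      _ = XL x * XLpinv x := by rw [hKXL, Matrix.one_mul]
  · -- Q idempotent
    have h0 : Jmat n * ((Jmat n)ᵀ * ((XL x * XLpinv x) * Jmat n))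
        = (XL x * XLpinv x) * Jmat n := by
      rw [← Matrix.mul_assoc, aux_JJt, one_mul]
    calc ((Jmat n)ᵀ * (XL x * XLpinv x) * Jmat n) * ((Jmat n)ᵀ * (XL x * XLpinv x) * Jmat n)
        = (Jmat n)ᵀ * ((XL x * XLpinv x) * (Jmat n * ((Jmat n)ᵀ * ((XL x * XLpinv x) * Jmat n)))) := by
          simp only [Matrix.mul_assoc]
      _ = (Jmat n)ᵀ * ((XL x * XLpinv x) * ((XL x * XLpinv x) * Jmat n)) := by rw [h0]
      _ = (Jmat n)ᵀ * (XL x * ((XLpinv x * XL x) * (XLpinv x * Jmat n))) := by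
          simp only [Matrix.mul_assoc]
      _ = (Jmat n)ᵀ * (XL x * XLpinv x) * Jmat n := by
          rw [hKXL, Matrix.one_mul]; simp only [Matrix.mul_assoc]
  · -- Q H P = 0
    have hHP : H * (XL x * XLpinv x) = XR x * XLpinv x := by
      rw [← Matrix.mul_assoc, aux_HXL x H hK]
    have h1 : (XL x * XLpinv x) * (Jmat n * (XR x * XLpinv x)) = 0 := by
      calc (XL x * XLpinv x) * (Jmat n * (XR x * XLpinv x))
          = XL x * (((XL x)ᵀ * XL x)⁻¹ * (((XL x)ᵀ * (Jmat n * XR x)) * XLpinv x)) := by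
            simp only [XLpinv, Matrix.mul_assoc]
        _ = 0 := by rw [aux_lagXR x hLag]; simp
    calc ((Jmat n)ᵀ * (XL x * XLpinv x) * Jmat n) * H * (XL x * XLpinv x)
        = (Jmat n)ᵀ * ((XL x * XLpinv x) * (Jmat n * (H * (XL x * XLpinv x)))) := by
          simp only [Matrix.mul_assoc]
      _ = (Jmat n)ᵀ * ((XL x * XLpinv x) * (Jmat n * (XR x * XLpinv x))) := by rw [hHP]
      _ = 0 := by rw [h1, Matrix.mul_zero]
  · -- Hhat = H P + Q H
    have hHP : H * (XL x * XLpinv x) = XR x * XLpinv x := by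
      rw [← Matrix.mul_assoc, aux_HXL x H hK]
    have hPsym : (XL x * XLpinv x)ᵀ = XL x * XLpinv x := by
      simp [XLpinv, Matrix.transpose_mul, Matrix.transpose_transpose,
        Matrix.transpose_nonsing_inv, Matrix.mul_assoc]
    have hmid : Jmat n * ((Jmat n)ᵀ * (Hᵀ * Jmat n)) = Hᵀ * Jmat n := by
      rw [← Matrix.mul_assoc, aux_JJt, one_mul]
    have h2 : (Jmat n)ᵀ * (XR x * XLpinv x)ᵀ * Jmat n
        = ((Jmat n)ᵀ * (XL x * XLpinv x) * Jmat n) * H := by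
      calc (Jmat n)ᵀ * (XR x * XLpinv x)ᵀ * Jmat n
          = (Jmat n)ᵀ * (H * (XL x * XLpinv x))ᵀ * Jmat n := by rw [hHP]
        _ = (Jmat n)ᵀ * ((XL x * XLpinv x) * Hᵀ) * Jmat n := by
            rw [Matrix.transpose_mul, hPsym]
        _ = ((Jmat n)ᵀ * (XL x * XLpinv x) * Jmat n) * ((Jmat n)ᵀ * Hᵀ * Jmat n) := by
            simp only [Matrix.mul_assoc, hmid]
        _ = ((Jmat n)ᵀ * (XL x * XLpinv x) * Jmat n) * H := by rw [hH]
    rw [Hhat, h2, hHP]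

end Aux

/-- `Ĥ` has minimal spectral norm among all skew-Hamiltonian matrices realizing the
Krylov relations `H x_k = x_{k+1}`. -/
theorem Hhat_min_specNorm {n : ℕ} (x : Fin n → (Fin n ⊕ Fin n) → ℝ)
    (hLI : LinearIndependent ℝ x)
    (hLag : ∀ i j : Fin n, x i ⬝ᵥ (Jmat n *ᵥ x j) = 0)
    (H : Matrix (Fin n ⊕ Fin n) (Fin n ⊕ Fin n) ℝ)
    (hH : IsSkewHamiltonian H) (hK : KrylovRel H x) :
    specNorm (Hhat x) ≤ specNorm H := by
  obtain ⟨P, Q, hPsym, hQsym, hPidem, hQidem, hQHP, hEq⟩ :=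
    aux_Hhat_decomp x hLI hLag H hH hK
  have hstar : ∀ M : Matrix (Fin n ⊕ Fin n) (Fin n ⊕ Fin n) ℝ, star M = Mᵀ := by
    intro M
    ext i j
    simp [Matrix.star_apply]
  set f := Matrix.toEuclideanCLM (𝕜 := ℝ) (n := Fin n ⊕ Fin n) with hf
  have hfadd : f (Hhat x) = f H * f P + f Q * f H := by
    rw [hEq, map_add, _root_.map_mul, _root_.map_mul]
  have hp : IsSelfAdjoint (f P) := by
    show star (f P) = f P
    rw [← map_star f P, hstar P, hPsym]
  have hq : IsSelfAdjoint (f Q) := by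
    show star (f Q) = f Q
    rw [← map_star f Q, hstar Q, hQsym]
  have hp2 : f P * f P = f P := by rw [← _root_.map_mul, hPidem]
  have hq2 : f Q * f Q = f Q := by rw [← _root_.map_mul, hQidem]
  have hqTp : f Q * f H * f P = 0 := by
    rw [← _root_.map_mul, ← _root_.map_mul, hQHP, map_zero]
  calc specNorm (Hhat x) = ‖f H * f P + f Q * f H‖ := by rw [specNorm, ← hf, hfadd]
    _ ≤ ‖f H‖ := aux_opnorm_proj_bound (f H) (f P) (f Q) hp hq hp2 hq2 hqTp
    _ = specNorm H := rfl
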